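/- If the system (D,H,A) is output s-sparse-controllable, then s ≥ m − rank(AD) and, for every λ ∈ ℂ, the m×(N+L) complex block matrix A·[λI − D | H] has rank m. -/

import Mathlib

open Matrix

/-- `h` is `s`-sparse: at most `s` nonzero entries. -/
def IsSparse {L : ℕ} (s : ℕ) (h : Fin L → ℝ) : Prop :=
  {i : Fin L | h i ≠ 0}.ncard ≤ s

/-- Inputs `h 0, …, h (K-1)` steer the state `xinit` to `xfinal`:
`xfinal − D^K xinit = ∑_{k=1}^{K} D^{K−k} H h_k`. -/
def Steers {N L : ℕ} (D : Matrix (Fin N) (Fin N) ℝ) (H : Matrix (Fin N) (Fin L) ℝ)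
    (K : ℕ) (h : Fin K → Fin L → ℝ) (xinit xfinal : Fin N → ℝ) : Prop :=
  xfinal - (D ^ K) *ᵥ xinit = ∑ k : Fin K, (D ^ (K - 1 - (k : ℕ))) *ᵥ (H *ᵥ h k)

/-- The system `(D, H)` is `s`-sparse-controllable. -/
def SparseControllable (N L s : ℕ) (D : Matrix (Fin N) (Fin N) ℝ)
    (H : Matrix (Fin N) (Fin L) ℝ) : Prop :=
  ∀ xinit xfinal : Fin N → ℝ, ∃ K : ℕ, 0 < K ∧ ∃ h : Fin K → Fin L → ℝ,
    (∀ k, IsSparse s (h k)) ∧ Steers D H K h xinit xfinal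

/-- Output controllability with unconstrained inputs, for outputs `y_k = A x_k`. -/
def OutputControllable (N L m : ℕ) (D : Matrix (Fin N) (Fin N) ℝ)
    (H : Matrix (Fin N) (Fin L) ℝ) (A : Matrix (Fin m) (Fin N) ℝ) : Prop :=
  ∀ (x0 : Fin N → ℝ) (yfinal : Fin m → ℝ), ∃ K : ℕ, 0 < K ∧ ∃ h : Fin K → Fin L → ℝ,
    yfinal - A *ᵥ ((D ^ K) *ᵥ x0)
      = ∑ k : Fin K, A *ᵥ ((D ^ (K - 1 - (k : ℕ))) *ᵥ (H *ᵥ h k))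

/-- Output `s`-sparse-controllability for outputs `y_k = A x_k`. -/
def OutputSparseControllable (N L m s : ℕ) (D : Matrix (Fin N) (Fin N) ℝ)
    (H : Matrix (Fin N) (Fin L) ℝ) (A : Matrix (Fin m) (Fin N) ℝ) : Prop :=
  ∀ (x0 : Fin N → ℝ) (yfinal : Fin m → ℝ), ∃ K : ℕ, 0 < K ∧ ∃ h : Fin K → Fin L → ℝ,
    (∀ k, IsSparse s (h k)) ∧
    yfinal - A *ᵥ ((D ^ K) *ᵥ x0)
      = ∑ k : Fin K, A *ᵥ ((D ^ (K - 1 - (k : ℕ))) *ᵥ (H *ᵥ h k))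

/-- PBH block matrix `[λ I − D | H]` over `ℂ` (entrywise complexification). -/
noncomputable def pbhMatrix {N L : ℕ} (D : Matrix (Fin N) (Fin N) ℝ)
    (H : Matrix (Fin N) (Fin L) ℝ) (lam : ℂ) : Matrix (Fin N) (Fin N ⊕ Fin L) ℂ :=
  Matrix.fromCols (lam • (1 : Matrix (Fin N) (Fin N) ℂ) - D.map Complex.ofReal)
    (H.map Complex.ofReal)

private lemma cplx_mulVec {a b : ℕ} (M : Matrix (Fin a) (Fin b) ℝ) (v : Fin b → ℝ) :
    (fun i => ((M *ᵥ v) i : ℂ)) = M.map Complex.ofReal *ᵥ (fun j => ((v j : ℂ))) := by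
  funext i
  simp [Matrix.mulVec, dotProduct, Matrix.map_apply]

private lemma cplx_map_pow {a : ℕ} (D : Matrix (Fin a) (Fin a) ℝ) (e : ℕ) :
    (D ^ e).map Complex.ofReal = (D.map Complex.ofReal) ^ e := by
  induction e with
  | zero =>
    simp only [pow_zero]
    exact Matrix.map_one _ Complex.ofReal_zero Complex.ofReal_one
  | succ n ih =>
    rw [pow_succ, pow_succ, ← ih]
    exact Matrix.map_mul (f := Complex.ofRealHom)

/-- Necessary conditions for output `s`-sparse-controllability:
`s ≥ m − rank(AD)` and `A · [λI − D | H]` has rank `m` for every `λ ∈ ℂ`. -/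
theorem output_sparse_controllable_necessary (N L m s : ℕ) (hN : 0 < N) (hL : 0 < L)
    (hm : 0 < m) (hs : 0 < s) (hsL : s ≤ L)
    (D : Matrix (Fin N) (Fin N) ℝ) (H : Matrix (Fin N) (Fin L) ℝ)
    (A : Matrix (Fin m) (Fin N) ℝ)
    (hctrl : OutputSparseControllable N L m s D H A) :
    m - (A * D).rank ≤ s ∧
    ∀ lam : ℂ, (A.map Complex.ofReal * pbhMatrix D H lam).rank = m := by
  classical
  constructor
  · -- dimension bound
    set B := A * H with hB
    set W : Submodule ℝ (Fin m → ℝ) := LinearMap.range (A * D).mulVecLin with hWdef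
    set p : Finset (Fin L) → Submodule ℝ (Fin m → ℝ) := fun S =>
      W ⊔ Submodule.span ℝ (Bᵀ '' ↑S) with hp
    have hcover : (⋃ S : {S : Finset (Fin L) // S.card ≤ s},
        ((p S.1 : Set (Fin m → ℝ)))) = Set.univ := by
      rw [Set.eq_univ_iff_forall]
      intro y
      obtain ⟨K, hK, h, hsp, heq⟩ := hctrl 0 y
      rw [Matrix.mulVec_zero, Matrix.mulVec_zero, sub_zero] at heq
      set klast : Fin K := ⟨K - 1, by omega⟩ with hkl
      have hfin : {i : Fin L | h klast i ≠ 0}.Finite := Set.toFinite _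
      set S : Finset (Fin L) := hfin.toFinset with hSdef
      have hcard : S.card ≤ s := by
        have hsparse := hsp klast
        rwa [IsSparse, Set.ncard_eq_toFinset_card _ hfin] at hsparse
      refine Set.mem_iUnion.2 ⟨⟨S, hcard⟩, ?_⟩
      rw [SetLike.mem_coe, heq]
      refine Submodule.sum_mem _ fun k _ => ?_
      rcases eq_or_ne (k : ℕ) (K - 1) with hk | hk
      · -- last input: uses the sparse support
        have hk0 : K - 1 - (k : ℕ) = 0 := by omega
        have hkeq : k = klast := Fin.ext (by simpa [hkl] using hk)
        rw [hk0, pow_zero, Matrix.one_mulVec, hkeq, Matrix.mulVec_mulVec]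
        have hexp : (A * H) *ᵥ h klast = ∑ j ∈ S, h klast j • (fun i => B i j) := by
          have expand : (A * H) *ᵥ h klast = ∑ j : Fin L, h klast j • (fun i => B i j) := by
            funext i
            simp [hB, Matrix.mulVec, dotProduct, Finset.sum_apply, mul_comm]
          rw [expand]
          symm
          apply Finset.sum_subset (Finset.subset_univ S)
          intro j _ hj
          have hj0 : h klast j = 0 := by
            by_contra hne
            exact hj (by simp [hSdef, Set.Finite.mem_toFinset, hne])
          simp [hj0]
        rw [hexp]
        refine Submodule.sum_mem _ fun j hj => ?_
        refine Submodule.smul_mem _ _ ?_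
        exact Submodule.mem_sup_right (Submodule.subset_span ⟨j, hj, rfl⟩)
      · -- earlier inputs: land in the range of A*D
        have hlt : (k : ℕ) < K - 1 := by
          have := k.isLt; omega
        have hsplit : K - 1 - (k : ℕ) = (K - 2 - (k : ℕ)) + 1 := by omega
        rw [hsplit, pow_succ', ← Matrix.mulVec_mulVec, Matrix.mulVec_mulVec]
        exact Submodule.mem_sup_left ⟨(D ^ (K - 2 - (k : ℕ))) *ᵥ (H *ᵥ h k), rfl⟩
    obtain ⟨S, hStop⟩ := Subspace.exists_eq_top_of_iUnion_eq_univ hcover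
    have h2 : Module.finrank ℝ (Submodule.span ℝ (Bᵀ '' ↑S.1)) ≤ s := by
      rw [← Finset.coe_image (f := (Bᵀ : Fin L → Fin m → ℝ)) (s := S.1)]
      exact (finrank_span_finset_le_card (S.1.image Bᵀ)).trans
        ((Finset.card_image_le).trans S.2)
    have h1 : Module.finrank ℝ (p S.1) ≤ (A * D).rank + s :=
      (Submodule.finrank_add_le_finrank_add_finrank _ _).trans (add_le_add le_rfl h2)
    have hm' : m ≤ (A * D).rank + s := by
      calc m = Module.finrank ℝ (Fin m → ℝ) := (Module.finrank_fin_fun ℝ).symm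
        _ = Module.finrank ℝ (⊤ : Submodule ℝ (Fin m → ℝ)) := (finrank_top ℝ _).symm
        _ = Module.finrank ℝ (p S.1) := by rw [hStop]
        _ ≤ _ := h1
    omega
  · intro lam
    set Ac := A.map Complex.ofReal with hAc
    set M := Ac * pbhMatrix D H lam with hM
    refine le_antisymm (M.rank_le_card_height.trans (by simp)) ?_
    by_contra hlt
    push_neg at hlt
    have hrkT : Mᵀ.rank < m := by rwa [Matrix.rank_transpose]
    have hker : LinearMap.ker Mᵀ.mulVecLin ≠ ⊥ := by
      intro hbot
      have hrn := LinearMap.finrank_range_add_finrank_ker Mᵀ.mulVecLin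
      rw [hbot, finrank_bot, add_zero, Module.finrank_fin_fun] at hrn
      exact absurd hrn (Nat.ne_of_lt hrkT)
    obtain ⟨z, hz, hz0⟩ := Submodule.exists_mem_ne_zero_of_ne_bot hker
    have hzM : z ᵥ* M = 0 := by
      rw [← Matrix.mulVec_transpose]
      exact hz
    set w := z ᵥ* Ac with hw
    have hpbh : w ᵥ* pbhMatrix D H lam = 0 := by
      rw [hw, Matrix.vecMul_vecMul, ← hM]; exact hzM
    rw [pbhMatrix, Matrix.vecMul_fromCols] at hpbh
    have h1 : w ᵥ* (lam • (1 : Matrix (Fin N) (Fin N) ℂ) - D.map Complex.ofReal) = 0 := by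
      funext j; exact congrFun hpbh (Sum.inl j)
    have h2 : w ᵥ* H.map Complex.ofReal = 0 := by
      funext j; exact congrFun hpbh (Sum.inr j)
    have hD : w ᵥ* D.map Complex.ofReal = lam • w := by
      rw [Matrix.vecMul_sub, sub_eq_zero] at h1
      rw [← h1, Matrix.smul_one_eq_diagonal, Matrix.vecMul_diagonal_const]
      exact op_smul_eq_smul lam w
    have hpow : ∀ e : ℕ, w ᵥ* (D.map Complex.ofReal) ^ e = lam ^ e • w := by
      intro e
      induction e with
      | zero => simp [Matrix.vecMul_one]
      | succ n ih =>
        rw [pow_succ, ← Matrix.vecMul_vecMul, ih, Matrix.smul_vecMul, hD, smul_smul, pow_succ]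
    have hzero : ∀ e : ℕ, w ᵥ* ((D.map Complex.ofReal) ^ e * H.map Complex.ofReal) = 0 := by
      intro e
      rw [← Matrix.vecMul_vecMul, hpow, Matrix.smul_vecMul, h2, smul_zero]
    obtain ⟨i, hi⟩ : ∃ i, z i ≠ 0 := Function.ne_iff.mp hz0
    obtain ⟨K, hK, h, hsp, heq⟩ := hctrl 0 (Pi.single i 1)
    rw [Matrix.mulVec_zero, Matrix.mulVec_zero, sub_zero] at heq
    have key : (z ⬝ᵥ fun j => (((Pi.single i 1 : Fin m → ℝ)) j : ℂ)) = 0 := by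
      have hsum : (fun j => (((Pi.single i 1 : Fin m → ℝ)) j : ℂ))
          = ∑ k : Fin K, fun j =>
              ((A *ᵥ ((D ^ (K - 1 - (k : ℕ))) *ᵥ (H *ᵥ h k))) j : ℂ) := by
        funext j
        rw [heq]
        simp [Finset.sum_apply]
      have hds : ∀ (f : Fin K → Fin m → ℂ), z ⬝ᵥ (∑ k, f k) = ∑ k, z ⬝ᵥ f k := by
        intro f
        simp only [dotProduct, Finset.sum_apply, Finset.mul_sum]
        exact Finset.sum_comm
      rw [hsum, hds]
      refine Finset.sum_eq_zero fun k _ => ?_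
      rw [cplx_mulVec, cplx_mulVec, cplx_mulVec, cplx_map_pow]
      rw [Matrix.dotProduct_mulVec, ← hw, Matrix.dotProduct_mulVec, hpow,
        smul_dotProduct, Matrix.dotProduct_mulVec, h2]
      simp
    have hsingle : (fun j => (((Pi.single i 1 : Fin m → ℝ)) j : ℂ))
        = Pi.single i (1 : ℂ) := by
      funext j
      rcases eq_or_ne j i with rfl | hne <;> simp [Pi.single_apply, *]
    rw [hsingle, dotProduct_single, mul_one] at key
    exact hi key
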